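/- Let (X, d, μ) be an upper doubling metric measure space with dominating function λ satisfying λ(x, r) ≤ C λ(y, r) whenever d(x, y) ≤ r. Then for any two balls B ⊂ S ⊂ R one has δ(B, R) ≤ δ(B, S) + c δ(S, R) + c for some constant c depending only on the space, where δ(B,S) = ∫_{(2S)∖B} dμ(x)/λ(c_B, d(x, c_B)) and c_B is the center of B. -/

import Mathlib

open Metric MeasureTheory

/-- Tolsa-Hytönen coefficient `δ(B, S)` of two balls `B ⊆ S`. -/
noncomputable def delta {X : Type*} [MetricSpace X] [MeasurableSpace X]
    (μ : Measure X) (Λ : X → ℝ → ℝ) (cB : X) (rB : ℝ) (cS : X) (rS : ℝ) : ℝ :=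
  (∫⁻ x in ball cS (2 * rS) \ ball cB rB,
      ENNReal.ofReal ((Λ cB (dist x cB))⁻¹) ∂μ).toReal

private lemma lint_fin {X : Type*} [MetricSpace X] [MeasurableSpace X] [BorelSpace X]
    (μ : Measure X) (Λ : X → ℝ → ℝ)
    (hΛpos : ∀ (x : X) (r : ℝ), 0 < r → 0 < Λ x r)
    (hΛmono : ∀ (x : X) (r s : ℝ), 0 < r → r ≤ s → Λ x r ≤ Λ x s)
    (hΛdom : ∀ (x : X) (r : ℝ), 0 < r → μ (ball x r) ≤ ENNReal.ofReal (Λ x r))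
    (c1 c2 : X) (r1 R : ℝ) (h1 : 0 < r1) (hR : 0 < R) :
    ∫⁻ x in ball c2 R \ ball c1 r1, ENNReal.ofReal ((Λ c1 (dist x c1))⁻¹) ∂μ ≠ ⊤ := by
  have hb : ∫⁻ x in ball c2 R \ ball c1 r1, ENNReal.ofReal ((Λ c1 (dist x c1))⁻¹) ∂μ
      ≤ ∫⁻ _x in ball c2 R \ ball c1 r1, ENNReal.ofReal ((Λ c1 r1)⁻¹) ∂μ := by
    apply setLIntegral_mono' (measurableSet_ball.diff measurableSet_ball)
    intro x hx
    have hd : r1 ≤ dist x c1 := le_of_not_gt (fun h => hx.2 (mem_ball.mpr h))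
    exact ENNReal.ofReal_le_ofReal
      (inv_anti₀ (hΛpos c1 r1 h1) (hΛmono c1 r1 _ h1 hd))
  have hb2 : ∫⁻ _x in ball c2 R \ ball c1 r1, ENNReal.ofReal ((Λ c1 r1)⁻¹) ∂μ
      = ENNReal.ofReal ((Λ c1 r1)⁻¹) * μ (ball c2 R \ ball c1 r1) :=
    setLIntegral_const _ _
  have hμ : μ (ball c2 R \ ball c1 r1) ≤ ENNReal.ofReal (Λ c2 R) :=
    le_trans (measure_mono Set.diff_subset) (hΛdom c2 R hR)
  have hle : ∫⁻ x in ball c2 R \ ball c1 r1, ENNReal.ofReal ((Λ c1 (dist x c1))⁻¹) ∂μ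
      ≤ ENNReal.ofReal ((Λ c1 r1)⁻¹) * ENNReal.ofReal (Λ c2 R) :=
    hb.trans (hb2.le.trans (by gcongr))
  exact ne_top_of_le_ne_top (ENNReal.mul_ne_top ENNReal.ofReal_ne_top ENNReal.ofReal_ne_top) hle

theorem delta_triangle {X : Type*} [MetricSpace X] [MeasurableSpace X] [BorelSpace X]
    (μ : Measure X) (Λ : X → ℝ → ℝ) (Cl C₀ : ℝ)
    (hΛpos : ∀ (x : X) (r : ℝ), 0 < r → 0 < Λ x r)
    (hΛmono : ∀ (x : X) (r s : ℝ), 0 < r → r ≤ s → Λ x r ≤ Λ x s)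
    (hΛdom : ∀ (x : X) (r : ℝ), 0 < r → μ (ball x r) ≤ ENNReal.ofReal (Λ x r))
    (hΛdouble : ∀ (x : X) (r : ℝ), 0 < r → Λ x r ≤ Cl * Λ x (r / 2))
    (hΛcomp : ∀ (x y : X) (r : ℝ), 0 < r → dist x y ≤ r → Λ x r ≤ C₀ * Λ y r) :
    ∃ c : ℝ, 0 < c ∧ ∀ (cB cS cR : X) (rB rS rR : ℝ), 0 < rB → 0 < rS → 0 < rR →
      ball cB rB ⊆ ball cS rS → ball cS rS ⊆ ball cR rR →
      delta μ Λ cB rB cR rR ≤ delta μ Λ cB rB cS rS + c * delta μ Λ cS rS cR rR + c := by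
  refine ⟨max 1 (Cl * C₀), lt_of_lt_of_le one_pos (le_max_left _ _), ?_⟩
  set c := max 1 (Cl * C₀) with hcdef
  have hcpos : (0:ℝ) < c := lt_of_lt_of_le one_pos (le_max_left _ _)
  intro cB cS cR rB rS rR hrB hrS hrR hBS hSR
  -- positivity of the constants
  have hCl : 0 < Cl := by
    have h1 := hΛpos cB (1/2) (by norm_num)
    have h2 := hΛpos cB 1 one_pos
    have h3 := hΛdouble cB 1 one_pos
    nlinarith
  have hC0 : 0 < C₀ := by
    have h2 := hΛpos cB 1 one_pos
    have h3 := hΛcomp cB cB 1 one_pos (by simp)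
    nlinarith
  have hKc : Cl * C₀ ≤ c := le_max_right _ _
  have hBScent : dist cB cS < rS := mem_ball.mp (hBS (mem_ball_self hrB))
  -- sets and integrands
  set A := ball cR (2*rR) \ ball cB rB with hA
  set S1 := ball cS (2*rS) \ ball cB rB with hS1
  set D := ball cR (2*rR) \ ball cS (2*rS) with hD
  set E := ball cR (2*rR) \ ball cS rS with hE
  set f := fun x => ENNReal.ofReal ((Λ cB (dist x cB))⁻¹) with hf
  set g := fun x => ENNReal.ofReal ((Λ cS (dist x cS))⁻¹) with hg
  have hsub : A ⊆ S1 ∪ D := by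
    intro x hx
    by_cases h : x ∈ ball cS (2*rS)
    · exact Or.inl ⟨h, hx.2⟩
    · exact Or.inr ⟨hx.1, h⟩
  have hDE : D ⊆ E := by
    intro x hx
    exact ⟨hx.1, fun h => hx.2 (ball_subset_ball (by linarith) h)⟩
  -- pointwise bound on D
  have hpt : ∀ x ∈ D, f x ≤ ENNReal.ofReal c * g x := by
    intro x hx
    have ht : 2*rS ≤ dist x cS := le_of_not_gt (fun h => hx.2 (mem_ball.mpr h))
    have htri : dist x cS ≤ dist x cB + dist cB cS := dist_triangle x cB cS
    have hs : rS ≤ dist x cB := by linarith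
    have hs2 : dist x cS / 2 ≤ dist x cB := by linarith
    have hcomp : dist cS cB ≤ dist x cB := by rw [dist_comm]; linarith
    have e1 : Λ cS (dist x cS) ≤ Cl * Λ cS (dist x cS / 2) :=
      hΛdouble cS _ (by linarith)
    have e2 : Λ cS (dist x cS / 2) ≤ Λ cS (dist x cB) :=
      hΛmono cS _ _ (by linarith) hs2
    have e3 : Λ cS (dist x cB) ≤ C₀ * Λ cB (dist x cB) :=
      hΛcomp cS cB _ (by linarith) hcomp
    have e : Λ cS (dist x cS) ≤ (Cl * C₀) * Λ cB (dist x cB) := by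
      nlinarith [mul_le_mul_of_nonneg_left e2 hCl.le, mul_le_mul_of_nonneg_left e3 hCl.le]
    have hA0 : 0 < Λ cS (dist x cS) := hΛpos cS _ (by linarith)
    have hB0 : 0 < Λ cB (dist x cB) := hΛpos cB _ (by linarith)
    have hK : (0:ℝ) < Cl * C₀ := mul_pos hCl hC0
    have h3 : Λ cS (dist x cS) / (Cl * C₀) ≤ Λ cB (dist x cB) := by
      rw [div_le_iff₀ hK]; nlinarith
    have h4 : 0 < Λ cS (dist x cS) / (Cl * C₀) := div_pos hA0 hK
    have h5 : (Λ cB (dist x cB))⁻¹ ≤ (Cl * C₀) * (Λ cS (dist x cS))⁻¹ := by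
      calc (Λ cB (dist x cB))⁻¹ ≤ (Λ cS (dist x cS) / (Cl * C₀))⁻¹ :=
            inv_anti₀ h4 h3
        _ = (Cl * C₀) * (Λ cS (dist x cS))⁻¹ := by
            rw [inv_div, div_eq_mul_inv]
    have h6 : (Λ cB (dist x cB))⁻¹ ≤ c * (Λ cS (dist x cS))⁻¹ := by
      refine h5.trans ?_
      exact mul_le_mul_of_nonneg_right hKc (inv_nonneg.mpr hA0.le)
    calc f x ≤ ENNReal.ofReal (c * (Λ cS (dist x cS))⁻¹) := ENNReal.ofReal_le_ofReal h6
      _ = ENNReal.ofReal c * g x := ENNReal.ofReal_mul hcpos.le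
  -- finiteness
  have hF1 : ∫⁻ x in S1, f x ∂μ ≠ ⊤ :=
    lint_fin μ Λ hΛpos hΛmono hΛdom cB cS rB (2*rS) hrB (by linarith)
  have hF2 : ∫⁻ x in E, g x ∂μ ≠ ⊤ :=
    lint_fin μ Λ hΛpos hΛmono hΛdom cS cR rS (2*rR) hrS (by linarith)
  -- main lintegral estimate
  have hDmeas : MeasurableSet D := measurableSet_ball.diff measurableSet_ball
  have step : ∫⁻ x in A, f x ∂μ
      ≤ ∫⁻ x in S1, f x ∂μ + ENNReal.ofReal c * ∫⁻ x in E, g x ∂μ := by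
    calc ∫⁻ x in A, f x ∂μ ≤ ∫⁻ x in S1 ∪ D, f x ∂μ := lintegral_mono_set hsub
      _ ≤ ∫⁻ x in S1, f x ∂μ + ∫⁻ x in D, f x ∂μ := lintegral_union_le _ _ _
      _ ≤ ∫⁻ x in S1, f x ∂μ + ∫⁻ x in D, ENNReal.ofReal c * g x ∂μ :=
          add_le_add_right (setLIntegral_mono' hDmeas hpt) _
      _ = ∫⁻ x in S1, f x ∂μ + ENNReal.ofReal c * ∫⁻ x in D, g x ∂μ := by
          rw [lintegral_const_mul' _ _ ENNReal.ofReal_ne_top]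
      _ ≤ ∫⁻ x in S1, f x ∂μ + ENNReal.ofReal c * ∫⁻ x in E, g x ∂μ :=
          by gcongr
  have hT : ∫⁻ x in S1, f x ∂μ + ENNReal.ofReal c * ∫⁻ x in E, g x ∂μ ≠ ⊤ :=
    ENNReal.add_ne_top.mpr ⟨hF1, ENNReal.mul_ne_top ENNReal.ofReal_ne_top hF2⟩
  -- conclude on the real level
  unfold delta
  have hmain : (∫⁻ x in A, f x ∂μ).toReal
      ≤ (∫⁻ x in S1, f x ∂μ).toReal + c * (∫⁻ x in E, g x ∂μ).toReal := by
    have := ENNReal.toReal_mono hT step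
    rwa [ENNReal.toReal_add hF1 (ENNReal.mul_ne_top ENNReal.ofReal_ne_top hF2),
      ENNReal.toReal_mul, ENNReal.toReal_ofReal hcpos.le] at this
  have hnn : 0 ≤ c * (∫⁻ x in E, g x ∂μ).toReal :=
    mul_nonneg hcpos.le ENNReal.toReal_nonneg
  linarith [hmain]
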